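/- Let B ⊆ A be a regular inclusion of C*-algebras with the ideal intersection property, N a *-semigroup of normalizers with dense span, and E : A → B a faithful N-invariant conditional expectation. For a regular ideal J of A, the map A/J → B/(B ∩ J), a + J ↦ E(a) + (J ∩ B), is a well-defined faithful conditional expectation. -/

import Mathlib

/-- Two-sided annihilator of a subset of an algebra. -/
def ann {A : Type*} [NonUnitalNonAssocSemiring A] (X : Set A) : Set A :=
  {a | ∀ x ∈ X, a * x = 0 ∧ x * a = 0}

/-- A (not necessarily closed) two-sided ideal, as a subset. -/
def IsAlgIdeal {A : Type*} [NonUnitalNonAssocSemiring A] (J : Set A) : Prop :=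
  (0 : A) ∈ J ∧ (∀ x ∈ J, ∀ y ∈ J, x + y ∈ J) ∧ ∀ a : A, ∀ x ∈ J, a * x ∈ J ∧ x * a ∈ J

/-- A closed two-sided ideal. -/
def IsIdeal {A : Type*} [NonUnitalNormedRing A] (J : Set A) : Prop :=
  IsAlgIdeal J ∧ IsClosed J

/-- A regular ideal: a closed two-sided ideal equal to its double annihilator. -/
def IsRegularIdeal {A : Type*} [NonUnitalNormedRing A] (J : Set A) : Prop :=
  IsIdeal J ∧ J = ann (ann J)

variable {A : Type*} [NonUnitalNormedRing A] [StarRing A] [CStarRing A] [CompleteSpace A]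
  [NormedSpace ℂ A] [IsScalarTower ℂ A A] [SMulCommClass ℂ A A] [StarModule ℂ A]
  [PartialOrder A] [StarOrderedRing A]

/-- `B` is a (non-unital, closed, star-closed) C*-subalgebra of `A`. -/
def IsCStarSubalgebra (B : Set A) : Prop :=
  (0 : A) ∈ B ∧ (∀ x ∈ B, ∀ y ∈ B, x + y ∈ B) ∧ (∀ x ∈ B, ∀ y ∈ B, x * y ∈ B) ∧
  (∀ (c : ℂ), ∀ x ∈ B, c • x ∈ B) ∧ (∀ x ∈ B, star x ∈ B) ∧ IsClosed B

/-- `B` contains an approximate unit for `A`. -/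
def ContainsApproxUnit (B : Set A) : Prop :=
  ∀ a : A, ∀ ε > (0 : ℝ), ∃ b ∈ B, ‖b‖ ≤ 1 ∧ ‖a - b * a‖ < ε ∧ ‖a - a * b‖ < ε

/-- `B ⊆ A` is an inclusion of C*-algebras: a C*-subalgebra containing an
approximate unit for `A`. -/
def IsCStarInclusion (B : Set A) : Prop :=
  IsCStarSubalgebra B ∧ ContainsApproxUnit B

/-- `n` is a normalizer of `B` in `A`: `nBn* ⊆ B` and `n*Bn ⊆ B`. -/
def IsNormalizer (B : Set A) (n : A) : Prop :=
  (∀ b ∈ B, n * b * star n ∈ B) ∧ (∀ b ∈ B, star n * b * n ∈ B)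

/-- `B ⊆ A` is a regular inclusion: an inclusion whose normalizers span a dense
subspace of `A`. -/
def IsRegularInclusion (B : Set A) : Prop :=
  IsCStarInclusion B ∧
  closure (Submodule.span ℂ {n | IsNormalizer B n} : Set A) = Set.univ

/-- `E : A → A` is a conditional expectation onto `B`. -/
def IsCondExp (B : Set A) (E : A → A) : Prop :=
  (∀ a, E a ∈ B) ∧ (∀ b ∈ B, E b = b) ∧
  (∀ x y, E (x + y) = E x + E y) ∧ (∀ (c : ℂ) (x : A), E (c • x) = c • E x) ∧
  (∀ a : A, 0 ≤ a → 0 ≤ E a) ∧ (∀ a, ‖E a‖ ≤ ‖a‖) ∧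
  (∀ b ∈ B, ∀ a, E (b * a) = b * E a ∧ E (a * b) = E a * b)

/-- Faithfulness of a positive map: `E(a*a) = 0 → a = 0`. -/
def IsFaithful (E : A → A) : Prop := ∀ a, E (star a * a) = 0 → a = 0

/-- `N` is a `*`-semigroup of normalizers of `B` with dense linear span in `A`. -/
def IsNormalizerSemigroup (B N : Set A) : Prop :=
  (∀ n ∈ N, IsNormalizer B n) ∧ (∀ n ∈ N, star n ∈ N) ∧
  (∀ m ∈ N, ∀ n ∈ N, m * n ∈ N) ∧
  closure (Submodule.span ℂ N : Set A) = Set.univ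

/-- `K` is invariant under `N`: `nKn* ⊆ K` for all `n ∈ N`. -/
def InvariantUnder (N K : Set A) : Prop := ∀ n ∈ N, ∀ k ∈ K, n * k * star n ∈ K

/-- `E` is `N`-invariant: `E(nan*) = nE(a)n*` for all `n ∈ N`. -/
def IsInvariantCondExp (N : Set A) (E : A → A) : Prop :=
  ∀ n ∈ N, ∀ a : A, E (n * a * star n) = n * E a * star n

/-- A closed two-sided ideal of the subalgebra `B`. -/
def IsIdealIn (B K : Set A) : Prop :=
  K ⊆ B ∧ (0 : A) ∈ K ∧ (∀ x ∈ K, ∀ y ∈ K, x + y ∈ K) ∧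
  (∀ b ∈ B, ∀ x ∈ K, b * x ∈ K ∧ x * b ∈ K) ∧ IsClosed K

/-- A regular ideal of the subalgebra `B`: `K = K^{⊥_B ⊥_B}` with annihilators
computed inside `B`. -/
def IsRegularIdealIn (B K : Set A) : Prop :=
  IsIdealIn B K ∧ K = ann (ann K ∩ B) ∩ B

/-- `B ⊆ A` has the ideal intersection property. -/
def HasIIP (B : Set A) : Prop :=
  ∀ J : Set A, IsIdeal J → J ≠ {0} → ∃ x ∈ J ∩ B, x ≠ 0

/-- `B ⊆ A` has the regular ideal intersection property. -/
def HasRIIP (B : Set A) : Prop :=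
  ∀ J : Set A, IsRegularIdeal J → J ≠ {0} → ∃ x ∈ J ∩ B, x ≠ 0

set_option linter.unusedSectionVars false
set_option maxHeartbeats 2000000

private lemma aux_star_mul_self_zero {x : A} (h : star x * x = 0) : x = 0 := by
  have h2 : ‖star x * x‖ = ‖x‖ * ‖x‖ := CStarRing.norm_star_mul_self
  rw [h, norm_zero] at h2
  exact norm_eq_zero.mp (by nlinarith [norm_nonneg x])

private lemma aux_mul_star_self_zero {x : A} (h : x * star x = 0) : x = 0 := by
  have h2 : ‖x * star x‖ = ‖x‖ * ‖x‖ := CStarRing.norm_self_mul_star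
  rw [h, norm_zero] at h2
  exact norm_eq_zero.mp (by nlinarith [norm_nonneg x])

private lemma aux_claim2 {V : Set A} (hV : ∀ a : A, ∀ x ∈ V, a * x ∈ V ∧ x * a ∈ V)
    {x : A} (hxV : x ∈ V) (hxann : ∀ w ∈ V, x * w = 0 ∧ w * x = 0) : x = 0 := by
  have h1 : x * star x ∈ V := (hV (star x) x hxV).2
  have h2 : (x * star x) * x = 0 := (hxann _ h1).2
  have h3 : (star x * x) * (star x * x) = 0 := by
    calc (star x * x) * (star x * x) = star x * ((x * star x) * x) := by noncomm_ring
    _ = 0 := by rw [h2, mul_zero]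
  have h4 : star x * x = 0 :=
    aux_star_mul_self_zero (by rw [star_mul, star_star]; exact h3)
  exact aux_star_mul_self_zero h4

private lemma aux_ann_closed (X : Set A) : IsClosed (ann X) := by
  have h : ann X = ⋂ x ∈ X, ({a : A | a * x = 0} ∩ {a : A | x * a = 0}) := by
    ext a; simp [ann, Set.mem_iInter, forall_and]
  rw [h]
  refine isClosed_biInter fun x _ => IsClosed.inter ?_ ?_
  · exact isClosed_eq (continuous_mul_right x) continuous_const
  · exact isClosed_eq (continuous_mul_left x) continuous_const

private lemma aux_ann_absorb {X : Set A} (hX : ∀ a : A, ∀ x ∈ X, a * x ∈ X ∧ x * a ∈ X) :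
    ∀ a : A, ∀ w ∈ ann X, a * w ∈ ann X ∧ w * a ∈ ann X := by
  intro a w hw
  constructor
  · intro x hx
    constructor
    · rw [mul_assoc]; rw [(hw x hx).1, mul_zero]
    · rw [← mul_assoc]
      exact (hw _ (hX a x hx).2).2
  · intro x hx
    constructor
    · rw [mul_assoc]
      exact (hw _ (hX a x hx).1).1
    · rw [← mul_assoc, (hw x hx).2, zero_mul]

private lemma aux_ann_add {X : Set A} :
    ∀ w ∈ ann X, ∀ v ∈ ann X, w + v ∈ ann X := by
  intro w hw v hv x hx
  rw [add_mul, mul_add, (hw x hx).1, (hv x hx).1, (hw x hx).2, (hv x hx).2, add_zero]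
  exact ⟨rfl, rfl⟩

private lemma aux_ann_zero (X : Set A) : (0 : A) ∈ ann X := by
  intro x hx; simp

private lemma aux_closure_span {S T : Set A} (f : A → A)
    (hadd : ∀ x y, f (x + y) = f x + f y)
    (hsmul : ∀ (c : ℂ) (x : A), ∃ c' : ℂ, f (c • x) = c' • f x)
    (hcont : Continuous f) (hT : IsClosed T) (hT0 : (0 : A) ∈ T)
    (hTadd : ∀ x ∈ T, ∀ y ∈ T, x + y ∈ T)
    (hTsmul : ∀ (c : ℂ), ∀ x ∈ T, c • x ∈ T)
    (hS : ∀ s ∈ S, f s ∈ T) :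
    ∀ x ∈ closure ((Submodule.span ℂ S : Submodule ℂ A) : Set A), f x ∈ T := by
  have hf0 : f 0 = 0 := by
    have h := hadd 0 0
    rw [add_zero] at h
    exact (left_eq_add.mp h)
  have hspan : ∀ x ∈ Submodule.span ℂ S, f x ∈ T := by
    intro x hx
    induction hx using Submodule.span_induction with
    | mem x hxS => exact hS x hxS
    | zero => rw [hf0]; exact hT0
    | add x y hx hy ihx ihy => rw [hadd]; exact hTadd _ ihx _ ihy
    | smul c x hx ih =>
      obtain ⟨c', hc'⟩ := hsmul c x
      rw [hc']; exact hTsmul c' _ ih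
  intro x hx
  exact closure_minimal hspan (hT.preimage hcont) hx

private lemma aux_zero_on_closure_span {S : Set A} (f : A → A)
    (hadd : ∀ x y, f (x + y) = f x + f y)
    (hsmul : ∀ (c : ℂ) (x : A), ∃ c' : ℂ, f (c • x) = c' • f x)
    (hcont : Continuous f) (hS : ∀ s ∈ S, f s = 0) :
    ∀ x ∈ closure ((Submodule.span ℂ S : Submodule ℂ A) : Set A), f x = 0 := by
  intro x hx
  have h := aux_closure_span (T := ({0} : Set A)) f hadd hsmul hcont isClosed_singleton rfl
    (by rintro x rfl y rfl; simp) (by rintro c x rfl; simp) (fun s hs => hS s hs) x hx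
  simpa using h

private lemma aux_smul_mem {B : Set A}
    (hApp : ContainsApproxUnit B)
    {K : Set A} (hKc : IsClosed K) (habs : ∀ (a : A), ∀ x ∈ K, a * x ∈ K)
    (c : ℂ) {x : A} (hx : x ∈ K) : c • x ∈ K := by
  rcases eq_or_ne c 0 with rfl | hc
  · rw [zero_smul]
    have h := habs 0 x hx
    rwa [zero_mul] at h
  · have hmem : c • x ∈ closure K := by
      rw [Metric.mem_closure_iff]
      intro ε hε
      have hcpos : (0:ℝ) < ‖c‖ := norm_pos_iff.mpr hc
      obtain ⟨b, hbB, _, hb2, _⟩ := hApp x (ε / ‖c‖) (div_pos hε hcpos)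
      refine ⟨(c • b) * x, habs _ x hx, ?_⟩
      rw [dist_eq_norm, smul_mul_assoc, ← smul_sub]
      rw [norm_smul]
      calc ‖c‖ * ‖x - b * x‖ < ‖c‖ * (ε / ‖c‖) := (mul_lt_mul_iff_right₀ hcpos).mpr hb2
      _ = ε := by rw [mul_comm, div_mul_cancel₀ _ (ne_of_gt hcpos)]
    rwa [hKc.closure_eq] at hmem

private lemma aux_smul_mem_real {B : Set A}
    (hApp : ContainsApproxUnit B)
    {K : Set A} (hKc : IsClosed K) (habs : ∀ (a : A), ∀ x ∈ K, a * x ∈ K)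
    (r : ℝ) {x : A} (hx : x ∈ K) : r • x ∈ K := by
  have h : r • x = ((r : ℂ)) • x := by
    rw [← algebraMap_smul ℂ r x]
    norm_num
  rw [h]
  exact aux_smul_mem hApp hKc habs _ hx

private lemma aux_bern (m : ℕ) {s : ℝ} (h0 : 0 ≤ s) (h1 : s ≤ 1) :
    (1 - s) ^ m * (1 + m * s) ≤ 1 := by
  induction m with
  | zero => simp
  | succ m ih =>
    have hnn : (0:ℝ) ≤ (1 - s) ^ m := pow_nonneg (by linarith) m
    have key : (1 - s) ^ (m + 1) * (1 + (m + 1 : ℕ) * s)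
        = (1 - s) ^ m * ((1 - s) * (1 + ((m:ℝ) + 1) * s)) := by push_cast; ring
    rw [key]
    have h2 : (1 - s) * (1 + ((m:ℝ) + 1) * s) ≤ 1 + m * s := by
      nlinarith [sq_nonneg s, mul_nonneg (Nat.cast_nonneg m : (0:ℝ) ≤ (m:ℝ)) (sq_nonneg s)]
    calc (1 - s) ^ m * ((1 - s) * (1 + ((m:ℝ) + 1) * s)) ≤ (1 - s) ^ m * (1 + m * s) :=
          mul_le_mul_of_nonneg_left h2 hnn
    _ ≤ 1 := ih

private lemma aux_bound (m : ℕ) (hm : 1 ≤ m) {s : ℝ} (h0 : 0 ≤ s) (h1 : s ≤ 1) :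
    s * (1 - s) ^ m ≤ 1 / m := by
  have hmpos : (0:ℝ) < m := by exact_mod_cast hm
  rw [le_div_iff₀ hmpos]
  have hnn : (0:ℝ) ≤ (1 - s) ^ m := pow_nonneg (by linarith) m
  calc s * (1 - s) ^ m * m = (1 - s) ^ m * (m * s) := by ring
  _ ≤ (1 - s) ^ m * (1 + m * s) := by nlinarith
  _ ≤ 1 := aux_bern m h0 h1

private lemma aux_hereditary {K : Set A}
    (hK0 : (0:A) ∈ K) (hKadd : ∀ x ∈ K, ∀ y ∈ K, x + y ∈ K)
    (habs : ∀ a : A, ∀ x ∈ K, a * x ∈ K ∧ x * a ∈ K) (hKc : IsClosed K)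
    (hsmulr : ∀ (r : ℝ) (x : A), x ∈ K → r • x ∈ K)
    (a : A) (h : star a * a ∈ K) : a ∈ K := by
  letI : NonUnitalCStarAlgebra A := {}
  have hu : (0:A) ≤ star a * a := star_mul_self_nonneg a
  have husa : IsSelfAdjoint (star a * a) := .of_nonneg hu
  set u : A := star a * a with hu_def
  by_cases hM : ‖u‖ = 0
  · have h0 : u = 0 := norm_eq_zero.mp hM
    rw [aux_star_mul_self_zero (x := a) (by rw [← hu_def]; exact h0)]
    exact hK0
  · have hMpos : (0:ℝ) < ‖u‖ := lt_of_le_of_ne (norm_nonneg u) (Ne.symm hM)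
    set M : ℝ := ‖u‖ with hMdef
    have key : a ∈ closure K := by
      rw [Metric.mem_closure_iff]
      intro ε hε
      obtain ⟨k, hk1, hklt⟩ : ∃ k : ℕ, 1 ≤ k ∧ M / (2 * k) < ε ^ 2 := by
        obtain ⟨k0, hk0⟩ := exists_nat_gt (M / (2 * ε ^ 2))
        refine ⟨k0 + 1, Nat.le_add_left 1 k0, ?_⟩
        have hq : M / (2 * ε ^ 2) < (k0 + 1 : ℕ) := by
          refine hk0.trans_le ?_
          exact_mod_cast Nat.le_succ k0
        have hkpos : (0:ℝ) < ((k0 + 1 : ℕ) : ℝ) := by positivity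
        rw [div_lt_iff₀ (by positivity)] at hq ⊢
        nlinarith
      have hkpos : (0:ℝ) < (k:ℝ) := by exact_mod_cast hk1
      set f : ℝ → ℝ := fun t => 1 - (1 - t / M) ^ k with hfdef
      set g : ℝ → ℝ := fun t => ((∑ j ∈ Finset.range k, (1 - t / M) ^ j) - k) / M with hgdef
      have hfc : ContinuousOn f (quasispectrum ℝ u) := by
        apply Continuous.continuousOn; fun_prop
      have hf0 : f 0 = 0 := by simp [hfdef]
      have hgc : ContinuousOn g (quasispectrum ℝ u) := by
        apply Continuous.continuousOn
        apply Continuous.div_const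
        apply Continuous.sub _ continuous_const
        exact continuous_finset_sum _ (fun j _ => by fun_prop)
      have hg0 : g 0 = 0 := by simp [hgdef]
      have hfactor : ∀ t, f t = ((k:ℝ) / M) * t + t * g t := by
        intro t
        simp only [hfdef, hgdef]
        have h2 : (1 : ℝ) - (1 - t/M) ^ k
            = (t/M) * (∑ j ∈ Finset.range k, (1 - t/M) ^ j) := by
          linear_combination geom_sum_mul (1 - t/M) k
        rw [h2]
        field_simp
        ring
      set m : A := cfcₙ f u with hmdef
      have hmsa : IsSelfAdjoint m := cfcₙ_predicate f u
      have hfm : ContinuousOn (fun t => t * f t) (quasispectrum ℝ u) :=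
        ContinuousOn.mul (by fun_prop) hfc
      have hmf : ContinuousOn (fun t => f t * t) (quasispectrum ℝ u) :=
        ContinuousOn.mul hfc (by fun_prop)
      have hmum : ContinuousOn (fun t => f t * (t * f t)) (quasispectrum ℝ u) :=
        ContinuousOn.mul hfc hfm
      have hmmem : m ∈ K := by
        have hsplit : m = ((k:ℝ) / M) • u + u * cfcₙ g u := by
          rw [hmdef]
          have h1 : cfcₙ f u = cfcₙ (fun t => ((k:ℝ)/M) * t + t * g t) u :=
            cfcₙ_congr (fun t _ => hfactor t)
          have hgm : ContinuousOn (fun t => t * g t) (quasispectrum ℝ u) :=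
            ContinuousOn.mul (by fun_prop) hgc
          rw [h1, cfcₙ_add _ _ u (by fun_prop) (by simp) hgm (by simp [hg0])]
          congr 1
          · exact cfcₙ_const_mul_id _ u husa
          · rw [cfcₙ_mul _ _ u (by fun_prop) (by simp) hgc hg0, cfcₙ_id' ℝ u]
        rw [hsplit]
        exact hKadd _ (hsmulr _ _ h) _ ((habs (cfcₙ g u) u h).2)
      have hspec : ∀ t ∈ quasispectrum ℝ u, 0 ≤ t ∧ t ≤ M := by
        intro t ht
        refine ⟨quasispectrum_nonneg_of_nonneg u hu t ht, ?_⟩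
        rw [Unitization.quasispectrum_eq_spectrum_inr ℝ u] at ht
        calc t ≤ ‖t‖ := le_abs_self t
        _ ≤ ‖(u : Unitization ℝ A)‖ := spectrum.norm_le_norm_of_mem ht
        _ = ‖u‖ := Unitization.norm_inr u
      have h1 : u * m = cfcₙ (fun t => t * f t) u := by
        rw [cfcₙ_mul _ _ u (by fun_prop) (by simp) hfc hf0, cfcₙ_id' ℝ u]
      have h2 : m * u = cfcₙ (fun t => f t * t) u := by
        rw [cfcₙ_mul _ _ u hfc hf0 (by fun_prop) (by simp), cfcₙ_id' ℝ u]
      have h3 : m * (u * m) = cfcₙ (fun t => f t * (t * f t)) u := by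
        rw [cfcₙ_mul _ _ u hfc hf0 hfm (by simp [hf0]), ← h1]
      have hdd : star (a - a * m) * (a - a * m) = cfcₙ (fun t => t * (1 - f t) ^ 2) u := by
        have hexp : star (a - a * m) * (a - a * m)
            = u - u * m - (m * u - m * (u * m)) := by
          rw [star_sub, star_mul, hmsa.star_eq, hu_def]
          noncomm_ring
        have h5 : cfcₙ (fun t => t * (1 - f t) ^ 2) u
            = cfcₙ (fun t => (t - t * f t) - (f t * t - f t * (t * f t))) u :=
          cfcₙ_congr (fun t _ => by ring)
        rw [hexp, h5,
          cfcₙ_sub _ _ u (show ContinuousOn (fun t => t - t * f t) (quasispectrum ℝ u) from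
              ContinuousOn.sub (f := fun t => t) (by fun_prop) hfm) (by simp [hf0])
            (show ContinuousOn (fun t => f t * t - f t * (t * f t)) (quasispectrum ℝ u) from
              ContinuousOn.sub hmf hmum) (by simp [hf0]),
          cfcₙ_sub _ _ u (by fun_prop) (by simp) hfm (by simp [hf0]),
          cfcₙ_sub _ _ u hmf (by simp [hf0]) hmum (by simp [hf0]),
          cfcₙ_id' ℝ u, ← h1, ← h2, ← h3]
      have hnorm : ‖star (a - a * m) * (a - a * m)‖ ≤ M / (2 * k) := by
        rw [hdd]
        apply norm_cfcₙ_le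
        intro t ht
        obtain ⟨ht0, htM⟩ := hspec t ht
        have hs0 : 0 ≤ t / M := div_nonneg ht0 (le_of_lt hMpos)
        have hs1 : t / M ≤ 1 := (div_le_one hMpos).mpr htM
        have hval : t * (1 - f t) ^ 2 = t * (1 - t/M) ^ (2 * k) := by
          simp only [hfdef]
          rw [two_mul, pow_add]
          ring
        show ‖t * (1 - f t) ^ 2‖ ≤ M / (2 * k)
        rw [hval, Real.norm_eq_abs,
          abs_of_nonneg (mul_nonneg ht0 (pow_nonneg (by linarith) _))]
        have hb := aux_bound (2 * k) (by omega) hs0 hs1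
        have hMt : M * (t / M) = t := by field_simp
        calc t * (1 - t/M) ^ (2*k) = M * ((t/M) * (1 - t/M) ^ (2*k)) := by
              rw [← mul_assoc, hMt]
        _ ≤ M * (1 / (2*k)) := by
              apply mul_le_mul_of_nonneg_left _ (le_of_lt hMpos)
              exact_mod_cast hb
        _ = M / (2*k) := by rw [mul_one_div]
      refine ⟨a * m, (habs a m hmmem).1, ?_⟩
      rw [dist_eq_norm]
      have hsq : ‖a - a * m‖ * ‖a - a * m‖ ≤ M / (2 * k) := by
        rw [← CStarRing.norm_star_mul_self]
        exact hnorm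
      nlinarith [norm_nonneg (a - a * m), hε]
    rwa [hKc.closure_eq] at key


/-- For a regular ideal `J` of `A`, the map
`A/J → B/(B ∩ J)`, `a + J ↦ E(a) + (J ∩ B)`, is a well-defined faithful conditional
expectation: the assignment is well defined (`a₁ - a₂ ∈ J ⟹ E a₁ - E a₂ ∈ J ∩ B`, in
particular `E(J) ⊆ J ∩ B`), and the induced map is faithful
(`E(a*a) ∈ J ⟹ a ∈ J`). -/
theorem quotient_condExp {B N : Set A} (hB : IsRegularInclusion B) (hIIP : HasIIP B)
    (hN : IsNormalizerSemigroup B N) (E : A → A) (hE : IsCondExp B E)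
    (hEf : IsFaithful E) (hEinv : IsInvariantCondExp N E)
    (J : Set A) (hJ : IsRegularIdeal J) :
    (∀ a₁ a₂ : A, a₁ - a₂ ∈ J → E a₁ - E a₂ ∈ J ∩ B) ∧
    (∀ a ∈ J, E a ∈ J ∩ B) ∧
    (∀ a : A, E (star a * a) ∈ J → a ∈ J) := by
  classical
  obtain ⟨⟨hBsub, hBapp⟩, _hBdense⟩ := hB
  obtain ⟨hB0, hBadd, hBmul, hBsmul, hBstar, hBclosed⟩ := hBsub
  obtain ⟨_hNnorm, hNstar, _hNmul, hNdense⟩ := hN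
  obtain ⟨hEB, hEfix, hEadd, hEsmul, _hEpos, _hEnorm, hEmod⟩ := hE
  obtain ⟨⟨⟨hJ0, hJadd, hJabs⟩, hJclosed⟩, hJreg⟩ := hJ
  have hE0 : E 0 = 0 := by
    have h := hEadd 0 0
    rw [add_zero] at h
    exact left_eq_add.mp h
  -- the annihilator of J
  set L : Set A := ann J with hLdef
  have hLabs : ∀ a : A, ∀ w ∈ L, a * w ∈ L ∧ w * a ∈ L := aux_ann_absorb hJabs
  -- generators
  set SS : Set A := (L ∩ B) ∪ (star '' (L ∩ B)) with hSSdef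
  set gens : Set A := {v | ∃ s ∈ SS, v = s ∨ (∃ a : A, v = a * s) ∨
    (∃ a : A, v = s * a) ∨ (∃ a a' : A, v = a * s * a')} with hgensdef
  set Vsub : Submodule ℂ A := (Submodule.span ℂ gens).topologicalClosure with hVsubdef
  set V : Set A := (Vsub : Set A) with hVdef
  have hVcoe : V = closure ((Submodule.span ℂ gens : Submodule ℂ A) : Set A) := rfl
  have hVclosed : IsClosed V := Submodule.isClosed_topologicalClosure _
  have hV0 : (0:A) ∈ V := Vsub.zero_mem
  have hVadd : ∀ x ∈ V, ∀ y ∈ V, x + y ∈ V := fun x hx y hy => Vsub.add_mem hx hy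
  have hVsmul : ∀ (c : ℂ), ∀ x ∈ V, c • x ∈ V := fun c x hx => Vsub.smul_mem c hx
  have hgensV : gens ⊆ V := fun v hv =>
    Submodule.le_topologicalClosure _ (Submodule.subset_span hv)
  have hSSgens : ∀ s ∈ SS, s ∈ gens := fun s hs => ⟨s, hs, Or.inl rfl⟩
  have hSSV : ∀ s ∈ SS, s ∈ V := fun s hs => hgensV (hSSgens s hs)
  -- star-closedness of SS
  have hSSstar : ∀ s ∈ SS, star s ∈ SS := by
    rintro s (hs | ⟨b, hb, rfl⟩)
    · exact Or.inr ⟨s, hs, rfl⟩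
    · rw [star_star]; exact Or.inl hb
  -- each element of SS is in B
  have hSSB : ∀ s ∈ SS, s ∈ B := by
    rintro s (⟨_, hsB⟩ | ⟨b, ⟨_, hbB⟩, rfl⟩)
    · exact hsB
    · exact hBstar b hbB
  -- density argument, left version
  have hdenseL : ∀ (c d : A), (∀ n ∈ N, c * (n * d) = 0) → ∀ a : A, c * (a * d) = 0 := by
    intro c d hcd a
    have h := aux_zero_on_closure_span (S := N) (f := fun y => c * (y * d))
      (fun x y => by
        show c * ((x + y) * d) = c * (x * d) + c * (y * d)
        rw [add_mul, mul_add])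
      (fun r x => ⟨r, by
        show c * ((r • x) * d) = r • (c * (x * d))
        rw [smul_mul_assoc, mul_smul_comm]⟩)
      (by fun_prop) hcd a (by rw [hNdense]; trivial)
    exact h
  have hdenseR : ∀ (c d : A), (∀ n ∈ N, (d * n) * c = 0) → ∀ a : A, (d * a) * c = 0 := by
    intro c d hcd a
    have h := aux_zero_on_closure_span (S := N) (f := fun y => (d * y) * c)
      (fun x y => by
        show (d * (x + y)) * c = (d * x) * c + (d * y) * c
        rw [mul_add, add_mul])
      (fun r x => ⟨r, by
        show (d * (r • x)) * c = r • ((d * x) * c)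
        rw [mul_smul_comm, smul_mul_assoc]⟩)
      (by fun_prop) hcd a (by rw [hNdense]; trivial)
    exact h
  -- b ∈ L ∩ B kills E(J) on both sides
  have hbE : ∀ b, b ∈ L → b ∈ B → ∀ x ∈ J, b * E x = 0 ∧ E x * b = 0 := by
    intro b hbL hbB x hx
    constructor
    · have h := (hEmod b hbB x).1
      rw [(hbL x hx).1, hE0] at h
      exact h.symm
    · have h := (hEmod b hbB x).2
      rw [(hbL x hx).2, hE0] at h
      exact h.symm
  -- E of products with star (E x)
  have hEsq : ∀ x ∈ J, star (E x) * E x = E (star (E x) * x) :=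
    fun x _ => ((hEmod (star (E x)) (hBstar _ (hEB x)) x).1).symm
  have hEsq' : ∀ x ∈ J, E x * star (E x) = E (x * star (E x)) :=
    fun x _ => ((hEmod (star (E x)) (hBstar _ (hEB x)) x).2).symm
  have hzJ : ∀ x ∈ J, star (E x) * x ∈ J := fun x hx => (hJabs (star (E x)) x hx).1
  have hz'J : ∀ x ∈ J, x * star (E x) ∈ J := fun x hx => (hJabs (star (E x)) x hx).2
  -- conjugation by normalizers
  have hconj : ∀ n ∈ N, ∀ z : A, star n * E z * n = E (star n * z * n) := by
    intro n hn z
    have h := hEinv (star n) (hNstar n hn) z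
    rw [star_star] at h
    exact h.symm
  have hconj' : ∀ n ∈ N, ∀ z : A, n * E z * star n = E (n * z * star n) := by
    intro n hn z
    exact (hEinv n hn z).symm
  have hJconj : ∀ n ∈ N, ∀ z ∈ J, star n * z * n ∈ J := by
    intro n _ z hz
    exact (hJabs n _ (hJabs (star n) z hz).1).2
  have hJconj' : ∀ n ∈ N, ∀ z ∈ J, n * z * star n ∈ J := by
    intro n _ z hz
    exact (hJabs (star n) _ (hJabs n z hz).1).2
  -- W1 : E x * s = 0 for s ∈ SS
  have hW1 : ∀ x ∈ J, ∀ s ∈ SS, E x * s = 0 := by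
    rintro x hx s (⟨hsL, hsB⟩ | ⟨b, ⟨hbL, hbB⟩, rfl⟩)
    · exact (hbE s hsL hsB x hx).2
    · apply aux_star_mul_self_zero (x := E x * star b)
      have h9 : star (E x * star b) * (E x * star b)
          = b * (star (E x) * E x) * star b := by
        simp only [star_mul, star_star]; noncomm_ring
      rw [h9, hEsq x hx, (hbE b hbL hbB _ (hzJ x hx)).1, zero_mul]
  -- W2 : s * E x = 0
  have hW2 : ∀ x ∈ J, ∀ s ∈ SS, s * E x = 0 := by
    rintro x hx s (⟨hsL, hsB⟩ | ⟨b, ⟨hbL, hbB⟩, rfl⟩)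
    · exact (hbE s hsL hsB x hx).1
    · apply aux_mul_star_self_zero (x := star b * E x)
      have h9 : (star b * E x) * star (star b * E x)
          = star b * (E x * star (E x)) * b := by
        simp only [star_mul, star_star]; noncomm_ring
      rw [h9, hEsq' x hx, mul_assoc,
        (hbE b hbL hbB _ (hz'J x hx)).2, mul_zero]
  -- W3 : E x * (n * s) = 0
  have hW3 : ∀ x ∈ J, ∀ n ∈ N, ∀ s ∈ SS, E x * (n * s) = 0 := by
    rintro x hx n hn s (⟨hsL, hsB⟩ | ⟨b, ⟨hbL, hbB⟩, rfl⟩)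
    · apply aux_star_mul_self_zero (x := E x * (n * s))
      have h9 : star (E x * (n * s)) * (E x * (n * s))
          = star s * ((star n * (star (E x) * E x) * n) * s) := by
        simp only [star_mul, star_star]; noncomm_ring
      rw [h9, hEsq x hx, hconj n hn _,
        (hbE s hsL hsB _ (hJconj n hn _ (hzJ x hx))).2, mul_zero]
    · apply aux_star_mul_self_zero (x := E x * (n * star b))
      have h9 : star (E x * (n * star b)) * (E x * (n * star b))
          = b * ((star n * (star (E x) * E x) * n) * star b) := by
        simp only [star_mul, star_star]; noncomm_ring
      rw [h9, hEsq x hx, hconj n hn _, ← mul_assoc,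
        (hbE b hbL hbB _ (hJconj n hn _ (hzJ x hx))).1, zero_mul]
  -- W4 : (s * n) * E x = 0
  have hW4 : ∀ x ∈ J, ∀ n ∈ N, ∀ s ∈ SS, (s * n) * E x = 0 := by
    rintro x hx n hn s (⟨hsL, hsB⟩ | ⟨b, ⟨hbL, hbB⟩, rfl⟩)
    · apply aux_mul_star_self_zero (x := (s * n) * E x)
      have h9 : ((s * n) * E x) * star ((s * n) * E x)
          = s * ((n * (E x * star (E x)) * star n) * star s) := by
        simp only [star_mul, star_star]; noncomm_ring
      rw [h9, hEsq' x hx, hconj' n hn _, ← mul_assoc,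
        (hbE s hsL hsB _ (hJconj' n hn _ (hz'J x hx))).1, zero_mul]
    · apply aux_mul_star_self_zero (x := (star b * n) * E x)
      have h9 : ((star b * n) * E x) * star ((star b * n) * E x)
          = star b * ((n * (E x * star (E x)) * star n) * b) := by
        simp only [star_mul, star_star]; noncomm_ring
      rw [h9, hEsq' x hx, hconj' n hn _,
        (hbE b hbL hbB _ (hJconj' n hn _ (hz'J x hx))).2, mul_zero]
  -- density upgrades
  have hG1 : ∀ x ∈ J, ∀ s ∈ SS, ∀ a : A, E x * (a * s) = 0 :=
    fun x hx s hs a => hdenseL (E x) s (fun n hn => hW3 x hx n hn s hs) a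
  have hG2 : ∀ x ∈ J, ∀ s ∈ SS, ∀ a : A, (s * a) * E x = 0 :=
    fun x hx s hs a => hdenseR (E x) s (fun n hn => hW4 x hx n hn s hs) a
  -- E x annihilates V
  have hEV : ∀ x ∈ J, ∀ v ∈ V, E x * v = 0 ∧ v * E x = 0 := by
    intro x hx v hv
    constructor
    · refine aux_zero_on_closure_span (S := gens) (f := fun v => E x * v)
        (fun y z => mul_add _ y z) (fun c y => ⟨c, mul_smul_comm c _ y⟩)
        (by fun_prop) ?_ v (by rw [← hVcoe]; exact hv)
      rintro w hw
      beta_reduce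
      obtain ⟨s, hs, (rfl | ⟨a, rfl⟩ | ⟨a, rfl⟩ | ⟨a, a', rfl⟩)⟩ := hw
      · exact hW1 x hx _ hs
      · exact hG1 x hx _ hs a
      · rw [← mul_assoc, hW1 x hx _ hs, zero_mul]
      · rw [← mul_assoc, hG1 x hx _ hs a, zero_mul]
    · refine aux_zero_on_closure_span (S := gens) (f := fun v => v * E x)
        (fun y z => add_mul y z _) (fun c y => ⟨c, smul_mul_assoc c y _⟩)
        (by fun_prop) ?_ v (by rw [← hVcoe]; exact hv)
      rintro w hw
      beta_reduce
      obtain ⟨s, hs, (rfl | ⟨a, rfl⟩ | ⟨a, rfl⟩ | ⟨a, a', rfl⟩)⟩ := hw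
      · exact hW2 x hx _ hs
      · rw [mul_assoc, hW2 x hx _ hs, mul_zero]
      · exact hG2 x hx _ hs a
      · rw [mul_assoc a s a', mul_assoc, hG2 x hx _ hs a', mul_zero]
  -- V is an ideal
  have hVabs : ∀ a : A, ∀ v ∈ V, a * v ∈ V ∧ v * a ∈ V := by
    intro a v hv
    constructor
    · refine aux_closure_span (S := gens) (T := V) (f := fun v => a * v)
        (fun y z => mul_add _ y z) (fun c y => ⟨c, mul_smul_comm c _ y⟩)
        (by fun_prop) hVclosed hV0 hVadd hVsmul ?_ v (by rw [← hVcoe]; exact hv)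
      rintro w hw
      beta_reduce
      obtain ⟨s, hs, (rfl | ⟨a₁, rfl⟩ | ⟨a₁, rfl⟩ | ⟨a₁, a₂, rfl⟩)⟩ := hw
      · exact hgensV ⟨_, hs, Or.inr (Or.inl ⟨a, rfl⟩)⟩
      · rw [← mul_assoc]
        exact hgensV ⟨s, hs, Or.inr (Or.inl ⟨a * a₁, rfl⟩)⟩
      · rw [← mul_assoc]
        exact hgensV ⟨s, hs, Or.inr (Or.inr (Or.inr ⟨a, a₁, rfl⟩))⟩
      · have he : a * (a₁ * s * a₂) = (a * a₁) * s * a₂ := by noncomm_ring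
        rw [he]
        exact hgensV ⟨s, hs, Or.inr (Or.inr (Or.inr ⟨a * a₁, a₂, rfl⟩))⟩
    · refine aux_closure_span (S := gens) (T := V) (f := fun v => v * a)
        (fun y z => add_mul y z _) (fun c y => ⟨c, smul_mul_assoc c y _⟩)
        (by fun_prop) hVclosed hV0 hVadd hVsmul ?_ v (by rw [← hVcoe]; exact hv)
      rintro w hw
      beta_reduce
      obtain ⟨s, hs, (rfl | ⟨a₁, rfl⟩ | ⟨a₁, rfl⟩ | ⟨a₁, a₂, rfl⟩)⟩ := hw
      · exact hgensV ⟨_, hs, Or.inr (Or.inr (Or.inl ⟨a, rfl⟩))⟩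
      · exact hgensV ⟨s, hs, Or.inr (Or.inr (Or.inr ⟨a₁, a, rfl⟩))⟩
      · rw [mul_assoc]
        exact hgensV ⟨s, hs, Or.inr (Or.inr (Or.inl ⟨a₁ * a, rfl⟩))⟩
      · have he : (a₁ * s * a₂) * a = a₁ * s * (a₂ * a) := by noncomm_ring
        rw [he]
        exact hgensV ⟨s, hs, Or.inr (Or.inr (Or.inr ⟨a₁, a₂ * a, rfl⟩))⟩
  -- V is star-closed
  have hVstar : ∀ v ∈ V, star v ∈ V := by
    intro v hv
    refine aux_closure_span (S := gens) (T := V) (f := fun v => star v)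
      (fun y z => star_add y z) (fun c y => ⟨star c, star_smul c y⟩)
      continuous_star hVclosed hV0 hVadd hVsmul ?_ v (by rw [← hVcoe]; exact hv)
    rintro w hw
    beta_reduce
    obtain ⟨s, hs, (rfl | ⟨a₁, rfl⟩ | ⟨a₁, rfl⟩ | ⟨a₁, a₂, rfl⟩)⟩ := hw
    · exact hSSV _ (hSSstar _ hs)
    · rw [star_mul]
      exact hgensV ⟨star s, hSSstar s hs, Or.inr (Or.inr (Or.inl ⟨star a₁, rfl⟩))⟩
    · rw [star_mul]
      exact hgensV ⟨star s, hSSstar s hs, Or.inr (Or.inl ⟨star a₁, rfl⟩)⟩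
    · have he : star (a₁ * s * a₂) = star a₂ * star s * star a₁ := by
        simp only [star_mul]; noncomm_ring
      rw [he]
      exact hgensV ⟨star s, hSSstar s hs, Or.inr (Or.inr (Or.inr ⟨star a₂, star a₁, rfl⟩))⟩
  -- the annihilator of V is contained in J
  have hannV : ∀ w : A, (∀ v ∈ V, w * v = 0 ∧ v * w = 0) → w ∈ J := by
    have hannVabs : ∀ a : A, ∀ w ∈ ann V, a * w ∈ ann V ∧ w * a ∈ ann V :=
      aux_ann_absorb (fun a x hx => hVabs a x hx)
    have hP : ∀ p, p ∈ L → p ∈ ann V → p = 0 := by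
      intro p hpL hpann
      by_contra hpne
      set P : Set A := L ∩ ann V with hPdef
      have hPzero : ∀ q, q ∈ P ∩ B → q = 0 := by
        rintro q ⟨⟨hqL, hqann⟩, hqB⟩
        exact aux_claim2 hVabs (hSSV q (Or.inl ⟨hqL, hqB⟩)) hqann
      have hPideal : IsIdeal P := by
        refine ⟨⟨⟨aux_ann_zero J, aux_ann_zero V⟩, ?_, ?_⟩, ?_⟩
        · intro x hx y hy
          exact ⟨aux_ann_add x hx.1 y hy.1, aux_ann_add x hx.2 y hy.2⟩
        · intro a x hx
          exact ⟨⟨(hLabs a x hx.1).1, (hannVabs a x hx.2).1⟩,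
            ⟨(hLabs a x hx.1).2, (hannVabs a x hx.2).2⟩⟩
        · exact (aux_ann_closed J).inter (aux_ann_closed V)
      have hPne : P ≠ {0} := by
        intro hPeq
        apply hpne
        have : p ∈ P := ⟨hpL, hpann⟩
        rwa [hPeq] at this
      obtain ⟨q, hq, hqne⟩ := hIIP P hPideal hPne
      exact hqne (hPzero q hq)
    intro w hw
    rw [hJreg]
    intro y hy
    constructor
    · exact hP (w * y) (hLabs w y hy).1 (hannVabs y w hw).2
    · exact hP (y * w) (hLabs w y hy).2 (hannVabs y w hw).1
  have hEJ : ∀ x ∈ J, E x ∈ J := fun x hx => hannV (E x) (fun v hv => hEV x hx v hv)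
  have hsmulJr : ∀ (r : ℝ) (x : A), x ∈ J → r • x ∈ J :=
    fun r x hx => aux_smul_mem_real hBapp hJclosed (fun a y hy => (hJabs a y hy).1) r hx
  refine ⟨?_, ?_, ?_⟩
  · intro a₁ a₂ hsub
    have h := hEadd (a₁ - a₂) a₂
    rw [sub_add_cancel] at h
    have hdiff : E a₁ - E a₂ = E (a₁ - a₂) := by rw [h, add_sub_cancel_right]
    rw [hdiff]
    exact ⟨hEJ _ hsub, hEB _⟩
  · intro a ha
    exact ⟨hEJ a ha, hEB a⟩
  · intro a ha
    have haS : ∀ s ∈ SS, a * s = 0 := by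
      rintro s (⟨hsL, hsB⟩ | ⟨b, ⟨hbL, hbB⟩, rfl⟩)
      · apply hEf (a * s)
        have h9 : star (a * s) * (a * s) = star s * ((star a * a) * s) := by
          simp only [star_mul]; noncomm_ring
        rw [h9, (hEmod (star s) (hBstar s hsB) _).1, (hEmod s hsB (star a * a)).2,
          (hsL _ ha).2, mul_zero]
      · apply hEf (a * star b)
        have h9 : star (a * star b) * (a * star b) = b * ((star a * a) * star b) := by
          simp only [star_mul, star_star]; noncomm_ring
        rw [h9, (hEmod b hbB _).1, (hEmod (star b) (hBstar b hbB) (star a * a)).2,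
          ← mul_assoc, (hbL _ ha).1, zero_mul]
    have haNS : ∀ n ∈ N, ∀ s ∈ SS, a * (n * s) = 0 := by
      rintro n hn s (⟨hsL, hsB⟩ | ⟨b, ⟨hbL, hbB⟩, rfl⟩)
      · apply hEf (a * (n * s))
        have h9 : star (a * (n * s)) * (a * (n * s))
            = star s * ((star n * (star a * a) * n) * s) := by
          simp only [star_mul]; noncomm_ring
        rw [h9, (hEmod (star s) (hBstar s hsB) _).1, (hEmod s hsB _).2,
          ← hconj n hn _, (hsL _ (hJconj n hn _ ha)).2, mul_zero]
      · apply hEf (a * (n * star b))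
        have h9 : star (a * (n * star b)) * (a * (n * star b))
            = b * ((star n * (star a * a) * n) * star b) := by
          simp only [star_mul, star_star]; noncomm_ring
        rw [h9, (hEmod b hbB _).1, (hEmod (star b) (hBstar b hbB) _).2,
          ← hconj n hn _, ← mul_assoc, (hbL _ (hJconj n hn _ ha)).1, zero_mul]
    have haaS : ∀ s ∈ SS, ∀ a₁ : A, a * (a₁ * s) = 0 :=
      fun s hs a₁ => hdenseL a s (fun n hn => haNS n hn s hs) a₁
    have haV : ∀ v ∈ V, a * v = 0 := by
      intro v hv
      refine aux_zero_on_closure_span (S := gens) (f := fun v => a * v)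
        (fun y z => mul_add _ y z) (fun c y => ⟨c, mul_smul_comm c _ y⟩)
        (by fun_prop) ?_ v (by rw [← hVcoe]; exact hv)
      rintro w hw
      beta_reduce
      obtain ⟨s, hs, (rfl | ⟨a₁, rfl⟩ | ⟨a₁, rfl⟩ | ⟨a₁, a₂, rfl⟩)⟩ := hw
      · exact haS _ hs
      · exact haaS _ hs a₁
      · rw [← mul_assoc, haS _ hs, zero_mul]
      · rw [← mul_assoc, haaS _ hs a₁, zero_mul]
    have hsaJ : star a * a ∈ J := by
      apply hannV
      intro v hv
      constructor
      · rw [mul_assoc, haV v hv, mul_zero]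
      · have h1 : a * star v = 0 := haV _ (hVstar v hv)
        have h2 : v * star a = 0 := by
          have h3 := congrArg star h1
          rwa [star_mul, star_star, star_zero] at h3
        rw [← mul_assoc, h2, zero_mul]
    exact aux_hereditary hJ0 hJadd hJabs hJclosed hsmulJr a hsaJ
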